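/- For all m ≥ 0, A_{0,m} = ∏_{k=1}^{m} (4k-1). In particular A_{0,m} is odd. -/

import Mathlib

open Finset

noncomputable def A (l m : ℕ) : ℚ :=
  ((l.factorial * m.factorial : ℕ) : ℚ) / 2 ^ (m - l) *
    ∑ k ∈ Finset.Icc l m,
      (2 : ℚ) ^ k * ((2 * m - 2 * k).choose (m - k)) * ((m + k).choose m) * (k.choose l)

/-- The inner sum, as a natural number. -/
def Ssum (m : ℕ) : ℕ :=
  ∑ k ∈ Finset.range (m + 1),
    2 ^ k * ((2 * m - 2 * k).choose (m - k)) * ((m + k).choose m)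

/-- The WZ-style per-`k` certificate identity, stated without subtraction. -/
lemma key (a k : ℕ) :
    (a + k + 1) * (2 ^ k * ((2 * a + 2).choose (a + 1)) * ((a + 2 * k + 1).choose (a + k + 1)))
      + 2 * (a + k + 1) * (2 ^ (k + 1) * ((2 * a).choose a) * ((a + 2 * k + 1).choose (a + k + 1)))
    = (8 * a + 8 * k + 6) * (2 ^ k * ((2 * a).choose a) * ((a + 2 * k).choose (a + k)))
      + 2 * (a + k + 1) * (2 ^ k * ((2 * a + 2).choose (a + 1)) * ((a + 2 * k).choose (a + k + 1))) := by
  have h1 : (a + 1) * ((2 * a + 2).choose (a + 1)) = (4 * a + 2) * ((2 * a).choose a) := by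
    have h := Nat.succ_mul_centralBinom_succ a
    simp only [Nat.centralBinom] at h
    rw [show 2 * (a + 1) = 2 * a + 2 from by ring,
      show 2 * (2 * a + 1) = 4 * a + 2 from by ring] at h
    exact h
  have h2 : (a + k + 1) * ((a + 2 * k).choose (a + k + 1)) = k * ((a + 2 * k).choose (a + k)) := by
    have h := Nat.choose_succ_right_eq (a + 2 * k) (a + k)
    rw [show a + 2 * k - (a + k) = k from by omega] at h
    rw [mul_comm, mul_comm k]
    exact h
  have h3 : (a + 2 * k + 1).choose (a + k + 1)
      = (a + 2 * k).choose (a + k) + (a + 2 * k).choose (a + k + 1) :=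
    Nat.choose_succ_succ _ _
  have hpos : 0 < (a + 1) * (a + k + 1) := by positivity
  refine Nat.eq_of_mul_eq_mul_left hpos ?_
  -- move to ℤ and use the certificate
  zify
  zify at h1 h2 h3
  set M : ℤ := (a : ℤ) + k + 1 with hM
  set c : ℤ := ((2 * a).choose a : ℤ)
  set d : ℤ := ((a + 2 * k).choose (a + k) : ℤ)
  set e : ℤ := ((a + 2 * k).choose (a + k + 1) : ℤ)
  set X : ℤ := ((2 * a + 2).choose (a + 1) : ℤ)
  set Y : ℤ := ((a + 2 * k + 1).choose (a + k + 1) : ℤ)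
  linear_combination (M * M * (d - e) * 2 ^ k) * h1 + (2 * M * c * 2 ^ k) * h2
    + (((a : ℤ) + 1) * M * M * (X + 4 * c) * 2 ^ k) * h3

/-- Auxiliary telescoping term. -/
def Gg (m k : ℕ) : ℕ :=
  2 ^ k * ((2 * m + 2 - 2 * k).choose (m + 1 - k)) * ((m + k).choose (m + 1))

lemma key' (m k : ℕ) (hk : k ≤ m) :
    (m + 1) * (2 ^ k * ((2 * (m + 1) - 2 * k).choose (m + 1 - k)) * ((m + 1 + k).choose (m + 1)))
      + 2 * (m + 1) * Gg m (k + 1)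
    = (8 * m + 6) * (2 ^ k * ((2 * m - 2 * k).choose (m - k)) * ((m + k).choose m))
      + 2 * (m + 1) * Gg m k := by
  obtain ⟨a, rfl⟩ : ∃ a, m = k + a := ⟨m - k, by omega⟩
  have h := key a k
  unfold Gg
  rw [show (2 * (k + a + 1) - 2 * k).choose (k + a + 1 - k) = (2 * a + 2).choose (a + 1)
      from by congr 1 <;> omega,
    show (k + a + 1 + k).choose (k + a + 1) = (a + 2 * k + 1).choose (a + k + 1)
      from by congr 1 <;> omega,
    show (2 * (k + a) + 2 - 2 * (k + 1)).choose (k + a + 1 - (k + 1)) = (2 * a).choose a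
      from by congr 1 <;> omega,
    show (k + a + (k + 1)).choose (k + a + 1) = (a + 2 * k + 1).choose (a + k + 1)
      from by congr 1 <;> omega,
    show (2 * (k + a) - 2 * k).choose (k + a - k) = (2 * a).choose a
      from by congr 1 <;> omega,
    show (k + a + k).choose (k + a) = (a + 2 * k).choose (a + k)
      from by congr 1 <;> omega,
    show (2 * (k + a) + 2 - 2 * k).choose (k + a + 1 - k) = (2 * a + 2).choose (a + 1)
      from by congr 1 <;> omega,
    show (k + a + k).choose (k + a + 1) = (a + 2 * k).choose (a + k + 1)
      from by congr 1 <;> omega,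
    show k + a + 1 = a + k + 1 from by omega,
    show 8 * (k + a) + 6 = 8 * a + 8 * k + 6 from by omega]
  exact h

lemma edge (m : ℕ) :
    (m + 1) * (2 ^ (m + 1) *
        ((2 * (m + 1) - 2 * (m + 1)).choose (m + 1 - (m + 1))) *
        ((m + 1 + (m + 1)).choose (m + 1)))
      = 2 * (m + 1) * Gg m (m + 1) := by
  unfold Gg
  simp only [show 2 * m + 2 - 2 * (m + 1) = 0 from by omega,
    show m + 1 + (m + 1) = 2 * m + 1 + 1 from by omega,
    show m + (m + 1) = 2 * m + 1 from by omega, Nat.sub_self,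
    show (2 : ℕ) * (m + 1) - 2 * (m + 1) = 0 from by omega, Nat.choose_self]
  have hsymm : (2 * m + 1).choose m = (2 * m + 1).choose (m + 1) := by
    have h := Nat.choose_symm (n := 2 * m + 1) (k := m + 1) (by omega)
    simpa [show 2 * m + 1 - (m + 1) = m from by omega] using h
  have hp : (2 * m + 1 + 1).choose (m + 1)
      = (2 * m + 1).choose m + (2 * m + 1).choose (m + 1) := Nat.choose_succ_succ _ _
  rw [hp, hsymm]
  ring

lemma Ssum_rec (m : ℕ) : (m + 1) * Ssum (m + 1) = (8 * m + 6) * Ssum m := by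
  classical
  set F : ℕ → ℕ := fun k =>
    2 ^ k * ((2 * (m + 1) - 2 * k).choose (m + 1 - k)) * ((m + 1 + k).choose (m + 1)) with hF
  have hmain : ∑ k ∈ range (m + 1), ((m + 1) * F k + 2 * (m + 1) * Gg m (k + 1))
      = ∑ k ∈ range (m + 1),
          ((8 * m + 6) * (2 ^ k * ((2 * m - 2 * k).choose (m - k)) * ((m + k).choose m))
            + 2 * (m + 1) * Gg m k) := by
    refine Finset.sum_congr rfl fun k hk => ?_
    exact key' m k (by simpa using Nat.lt_succ_iff.mp (mem_range.mp hk))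
  rw [Finset.sum_add_distrib, Finset.sum_add_distrib] at hmain
  have hG0 : Gg m 0 = 0 := by simp [Gg]
  have htel : ∑ k ∈ range (m + 1), Gg m (k + 1)
      = ∑ k ∈ range (m + 1), Gg m k + Gg m (m + 1) := by
    have h1 : ∑ k ∈ range (m + 2), Gg m k
        = ∑ k ∈ range (m + 1), Gg m (k + 1) + Gg m 0 := Finset.sum_range_succ' _ _
    have h2 : ∑ k ∈ range (m + 2), Gg m k
        = ∑ k ∈ range (m + 1), Gg m k + Gg m (m + 1) := Finset.sum_range_succ _ _
    omega
  have hmulG : ∑ k ∈ range (m + 1), 2 * (m + 1) * Gg m (k + 1)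
      = ∑ k ∈ range (m + 1), 2 * (m + 1) * Gg m k + 2 * (m + 1) * Gg m (m + 1) := by
    rw [← Finset.mul_sum, ← Finset.mul_sum, htel, Nat.mul_add]
  have hS1 : (m + 1) * Ssum (m + 1)
      = ∑ k ∈ range (m + 1), (m + 1) * F k + (m + 1) * F (m + 1) := by
    unfold Ssum
    rw [Finset.mul_sum, Finset.sum_range_succ]
  have hS0 : ∑ k ∈ range (m + 1),
      (8 * m + 6) * (2 ^ k * ((2 * m - 2 * k).choose (m - k)) * ((m + k).choose m))
      = (8 * m + 6) * Ssum m := by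
    unfold Ssum; rw [Finset.mul_sum]
  have hedge : (m + 1) * F (m + 1) = 2 * (m + 1) * Gg m (m + 1) := edge m
  omega

def T (m : ℕ) : ℕ := ∏ k ∈ Finset.Icc 1 m, (4 * k - 1)

lemma factorial_Ssum (m : ℕ) : m.factorial * Ssum m = 2 ^ m * T m := by
  induction m with
  | zero => simp [Ssum, T]
  | succ n ih =>
    have hrec := Ssum_rec n
    have h1 : (n + 1).factorial * Ssum (n + 1)
        = n.factorial * ((n + 1) * Ssum (n + 1)) := by
      rw [Nat.factorial_succ]; ring
    have hT : T (n + 1) = T n * (4 * (n + 1) - 1) := by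
      unfold T
      rw [Finset.prod_Icc_succ_top (by omega : 1 ≤ n + 1)]
    calc (n + 1).factorial * Ssum (n + 1)
        = n.factorial * ((n + 1) * Ssum (n + 1)) := h1
      _ = n.factorial * ((8 * n + 6) * Ssum n) := by rw [hrec]
      _ = (8 * n + 6) * (n.factorial * Ssum n) := by ring
      _ = (8 * n + 6) * (2 ^ n * T n) := by rw [ih]
      _ = 2 ^ (n + 1) * (T n * (4 * (n + 1) - 1)) := by
          have : 4 * (n + 1) - 1 = 4 * n + 3 := by omega
          rw [this]; ring
      _ = 2 ^ (n + 1) * T (n + 1) := by rw [hT]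

theorem A_zero (m : ℕ) :
    A 0 m = ((∏ k ∈ Finset.Icc 1 m, (4 * k - 1) : ℕ) : ℚ) ∧
      Odd (∏ k ∈ Finset.Icc 1 m, (4 * k - 1)) := by
  constructor
  · have hsum : ∑ k ∈ Finset.Icc 0 m,
        (2 : ℚ) ^ k * ((2 * m - 2 * k).choose (m - k)) * ((m + k).choose m) * (k.choose 0)
        = ((Ssum m : ℕ) : ℚ) := by
      unfold Ssum
      push_cast
      rw [show Finset.Icc 0 m = Finset.range (m + 1) by
        ext x; simp [Nat.lt_succ_iff]]
      refine Finset.sum_congr rfl fun k _ => ?_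
      simp [Nat.choose_zero_right]
    unfold A
    rw [hsum]
    have hkey : ((m.factorial : ℚ)) * ((Ssum m : ℕ) : ℚ) = 2 ^ m * ((T m : ℕ) : ℚ) := by
      have := factorial_Ssum m
      exact_mod_cast congrArg (fun n : ℕ => (n : ℚ)) this
    have h2 : ((2 : ℚ) ^ m) ≠ 0 := by positivity
    have : ((Nat.factorial 0 * m.factorial : ℕ) : ℚ) = (m.factorial : ℚ) := by
      simp [Nat.factorial]
    rw [this]
    rw [div_mul_eq_mul_div, Nat.sub_zero, hkey, mul_div_assoc, mul_comm ((2:ℚ) ^ m),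
      div_mul_cancel₀ _ h2]
    simp [T]
  · refine Finset.prod_induction _ Odd (fun _ _ => Odd.mul) odd_one fun k hk => ?_
    have hk1 : 1 ≤ k := (Finset.mem_Icc.mp hk).1
    exact ⟨2 * k - 1, by omega⟩
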